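/- Let G(x) = log(R/‖x−x0‖) + (‖x−x0‖² − R²)/(2R²) be the Green-type function on the ball B_R(x0) ⊂ ℝ². Then G ≥ 0 on B_R(x0), G vanishes on the boundary ∂B_R(x0), and ∫_{B_R(x0)} G(x) dx = πR²/4. -/

import Mathlib

open MeasureTheory Real

private lemma ftc_aux (R : ℝ) (hR : 0 < R) :
    ∫ r in (0:ℝ)..R, (r * Real.log R - r * Real.log r + r ^ 3 / (2 * R ^ 2) - r / 2)
      = R ^ 2 / 8 := by
  set Φ : ℝ → ℝ := fun r => r ^ 2 / 2 * Real.log R - r / 2 * (r * Real.log r)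
      + r ^ 4 / (8 * R ^ 2) with hΦ
  have hcont : ContinuousOn Φ (Set.Icc 0 R) := by
    apply Continuous.continuousOn
    exact (((continuous_pow 2).div_const 2).mul continuous_const).sub
      ((continuous_id.div_const 2).mul Real.continuous_mul_log) |>.add
      ((continuous_pow 4).div_const (8 * R ^ 2))
  have hderiv : ∀ r ∈ Set.Ioo (0:ℝ) R, HasDerivWithinAt Φ
      (r * Real.log R - r * Real.log r + r ^ 3 / (2 * R ^ 2) - r / 2) (Set.Ioi r) r := by
    intro r hr
    have h1 : HasDerivAt (fun x : ℝ => x ^ 2 / 2 * Real.log R)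
        ((2 * r ^ 1) / 2 * Real.log R) r :=
      (((hasDerivAt_pow 2 r).div_const 2).mul_const _)
    have h2 : HasDerivAt (fun x : ℝ => x / 2 * (x * Real.log x))
        (1 / 2 * (r * Real.log r) + r / 2 * (Real.log r + 1)) r :=
      ((hasDerivAt_id r).div_const 2).mul (Real.hasDerivAt_mul_log hr.1.ne')
    have h3 : HasDerivAt (fun x : ℝ => x ^ 4 / (8 * R ^ 2))
        ((4 * r ^ 3) / (8 * R ^ 2)) r := (hasDerivAt_pow 4 r).div_const _
    have := (((h1.sub h2).add h3).hasDerivWithinAt (s := Set.Ioi r) : HasDerivWithinAt Φ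
      (2 * r ^ 1 / 2 * Real.log R - (1 / 2 * (r * Real.log r) + r / 2 * (Real.log r + 1))
        + 4 * r ^ 3 / (8 * R ^ 2)) (Set.Ioi r) r)
    refine this.congr_deriv ?_
    have hR2 : R ^ 2 ≠ 0 := by positivity
    ring
  have hint : IntervalIntegrable
      (fun r : ℝ => r * Real.log R - r * Real.log r + r ^ 3 / (2 * R ^ 2) - r / 2)
      volume 0 R := by
    apply Continuous.intervalIntegrable
    exact ((continuous_id.mul continuous_const).sub Real.continuous_mul_log).add
      ((continuous_pow 3).div_const (2 * R ^ 2)) |>.sub (continuous_id.div_const 2)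
  have := intervalIntegral.integral_eq_sub_of_hasDeriv_right_of_le hR.le hcont hderiv hint
  rw [this]
  have hR2 : R ^ 2 ≠ 0 := by positivity
  simp only [hΦ]
  field_simp
  ring

private lemma ball_integral_aux (R : ℝ) (hR : 0 < R) (x0 : EuclideanSpace ℝ (Fin 2)) :
    (∫ x in Metric.ball x0 R,
      (Real.log (R / ‖x - x0‖) + (‖x - x0‖ ^ 2 - R ^ 2) / (2 * R ^ 2)))
      = π * R ^ 2 / 4 := by
  have hftc := ftc_aux R hR
  set F : ℝ → ℝ := fun r => Real.log (R / r) + (r ^ 2 - R ^ 2) / (2 * R ^ 2) with hF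
  set f : ℝ → ℝ := Set.indicator (Set.Iio R) F with hf
  have key : ∀ x : EuclideanSpace ℝ (Fin 2),
      Set.indicator (Metric.ball x0 R) (fun x => F ‖x - x0‖) x = f ‖x - x0‖ := by
    intro x
    by_cases hx : x ∈ Metric.ball x0 R
    · have hx' : ‖x - x0‖ ∈ Set.Iio R := by
        rw [Set.mem_Iio, ← mem_ball_iff_norm]; exact hx
      rw [Set.indicator_of_mem hx, hf, Set.indicator_of_mem hx']
    · have hx' : ‖x - x0‖ ∉ Set.Iio R := by
        rw [Set.mem_Iio, ← mem_ball_iff_norm]; exact hx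
      rw [Set.indicator_of_notMem hx, hf, Set.indicator_of_notMem hx']
  have step1 : (∫ x in Metric.ball x0 R,
      (Real.log (R / ‖x - x0‖) + (‖x - x0‖ ^ 2 - R ^ 2) / (2 * R ^ 2)))
      = ∫ x : EuclideanSpace ℝ (Fin 2), f ‖x - x0‖ := by
    rw [← integral_indicator measurableSet_ball]
    exact integral_congr_ae (Filter.Eventually.of_forall key)
  have step2 : (∫ x : EuclideanSpace ℝ (Fin 2), f ‖x - x0‖)
      = ∫ x : EuclideanSpace ℝ (Fin 2), f ‖x‖ :=
    integral_sub_right_eq_self (fun y => f ‖y‖) x0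
  have step3 := integral_fun_norm_addHaar (volume : Measure (EuclideanSpace ℝ (Fin 2))) f
  have hdim : Module.finrank ℝ (EuclideanSpace ℝ (Fin 2)) = 2 := by
    simp [finrank_euclideanSpace]
  rw [hdim] at step3
  have hvol : ((volume : Measure (EuclideanSpace ℝ (Fin 2))) (Metric.ball 0 1)).toReal = π := by
    rw [EuclideanSpace.volume_ball]
    have : ((Fintype.card (Fin 2) : ℝ) / 2 + 1) = 2 := by norm_num
    rw [this, Real.Gamma_two]
    simp [Real.sq_sqrt Real.pi_pos.le, ENNReal.toReal_ofReal Real.pi_pos.le]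
  have step4 : (∫ y in Set.Ioi (0:ℝ), y ^ (2 - 1) • f y)
      = ∫ r in (0:ℝ)..R, (r * Real.log R - r * Real.log r + r ^ 3 / (2 * R ^ 2) - r / 2) := by
    have e1 : ∀ y : ℝ, y ^ (2 - 1) • f y = Set.indicator (Set.Iio R) (fun y => y * F y) y := by
      intro y
      by_cases hy : y ∈ Set.Iio R
      · rw [hf, Set.indicator_of_mem hy, Set.indicator_of_mem hy]
        simp [mul_comm]
      · rw [hf, Set.indicator_of_notMem hy, Set.indicator_of_notMem hy]
        simp
    calc (∫ y in Set.Ioi (0:ℝ), y ^ (2 - 1) • f y)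
        = ∫ y in Set.Ioi (0:ℝ), Set.indicator (Set.Iio R) (fun y => y * F y) y :=
          integral_congr_ae (Filter.Eventually.of_forall fun y => e1 y)
      _ = ∫ y in Set.Ioi (0:ℝ) ∩ Set.Iio R, y * F y := by
          rw [setIntegral_indicator measurableSet_Iio]
      _ = ∫ y in Set.Ioo (0:ℝ) R, y * F y := by rw [Set.Ioi_inter_Iio]
      _ = ∫ y in Set.Ioo (0:ℝ) R,
            (y * Real.log R - y * Real.log y + y ^ 3 / (2 * R ^ 2) - y / 2) := by
          apply setIntegral_congr_fun measurableSet_Ioo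
          intro y hy
          have hy0 : y ≠ 0 := hy.1.ne'
          have hlog : Real.log (R / y) = Real.log R - Real.log y := Real.log_div hR.ne' hy0
          simp only [hF, hlog]
          have hR2 : R ^ 2 ≠ 0 := by positivity
          field_simp
          ring
      _ = ∫ r in (0:ℝ)..R, (r * Real.log R - r * Real.log r + r ^ 3 / (2 * R ^ 2) - r / 2) := by
          rw [intervalIntegral.integral_of_le hR.le, ← integral_Ioc_eq_integral_Ioo]
  rw [step1, step2, step3, step4, hftc, measureReal_def, hvol]
  simp only [nsmul_eq_mul, smul_eq_mul]
  ring

/-- The Green-type function `G(x) = log(R/‖x−x0‖) + (‖x−x0‖² − R²)/(2R²)` on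
`B_R(x0) ⊂ ℝ²` is nonnegative on the ball, vanishes on the boundary sphere,
and has integral `πR²/4` over the ball. -/
theorem stmt_7 (R : ℝ) (hR : 0 < R) (x0 : EuclideanSpace ℝ (Fin 2))
    (G : EuclideanSpace ℝ (Fin 2) → ℝ)
    (hG : ∀ x, x ≠ x0 →
      G x = Real.log (R / ‖x - x0‖) + (‖x - x0‖ ^ 2 - R ^ 2) / (2 * R ^ 2)) :
    (∀ x ∈ Metric.ball x0 R, x ≠ x0 → 0 ≤ G x) ∧
    (∀ x ∈ Metric.sphere x0 R, G x = 0) ∧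
    (∫ x in Metric.ball x0 R, G x) = π * R ^ 2 / 4 := by
  refine ⟨?_, ?_, ?_⟩
  · intro x hx hne
    rw [hG x hne]
    set t := ‖x - x0‖ with ht
    have ht0 : 0 < t := by
      rw [ht]
      exact norm_sub_pos_iff.mpr hne
    have htR : t < R := by rwa [← mem_ball_iff_norm]
    have h1 : Real.log (t / R) ≤ t / R - 1 :=
      Real.log_le_sub_one_of_pos (by positivity)
    have h2 : Real.log (R / t) = - Real.log (t / R) := by
      rw [← Real.log_inv]
      congr 1
      field_simp
    rw [h2]
    have hR2 : (0:ℝ) < 2 * R ^ 2 := by positivity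
    have h3 : (t ^ 2 - R ^ 2) / (2 * R ^ 2) - (t / R - 1) = (t - R) ^ 2 / (2 * R ^ 2) := by
      field_simp
      ring
    have h4 : 0 ≤ (t - R) ^ 2 / (2 * R ^ 2) := div_nonneg (sq_nonneg _) hR2.le
    linarith
  · intro x hx
    have hxn : ‖x - x0‖ = R := by rwa [← mem_sphere_iff_norm]
    have hne : x ≠ x0 := by
      intro h
      rw [h] at hxn
      simp at hxn
      exact hR.ne hxn
    rw [hG x hne, hxn]
    rw [div_self hR.ne', Real.log_one]
    simp
  · have hcong : (∫ x in Metric.ball x0 R, G x)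
        = ∫ x in Metric.ball x0 R,
            (Real.log (R / ‖x - x0‖) + (‖x - x0‖ ^ 2 - R ^ 2) / (2 * R ^ 2)) := by
      apply setIntegral_congr_ae measurableSet_ball
      have h0 : ∀ᵐ x : EuclideanSpace ℝ (Fin 2), x ≠ x0 := by
        rw [MeasureTheory.ae_iff]
        simpa using MeasureTheory.measure_singleton x0
      filter_upwards [h0] with x hx _
      exact hG x hx
    rw [hcong]
    exact ball_integral_aux R hR x0
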